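/- Let D be an integral domain and G an orderable group (G admits a bi-invariant linear order). Then the group ring D[G] has only trivial units: every unit of D[G] is of the form u·g with u a unit of D and g ∈ G. -/

import Mathlib

theorem orderable_group_ring_trivial_units
    {D : Type*} [CommRing D] [IsDomain D]
    {G : Type*} [Group G] [LinearOrder G]
    [CovariantClass G G (· * ·) (· < ·)]
    [CovariantClass G G (Function.swap (· * ·)) (· < ·)] :
    ∀ x : MonoidAlgebra D G, IsUnit x →
      ∃ (u : Dˣ) (g : G), x = MonoidAlgebra.single g (u : D) := by
  classical
  intro x hx
  obtain ⟨v, rfl⟩ := hx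
  set x : MonoidAlgebra D G := (v : MonoidAlgebra D G) with hxdef
  set y : MonoidAlgebra D G := ((v⁻¹ : (MonoidAlgebra D G)ˣ) : MonoidAlgebra D G) with hydef
  have hxy : x * y = 1 := v.mul_inv
  have hx0 : x ≠ 0 := by
    intro h; rw [h, zero_mul] at hxy; exact one_ne_zero hxy.symm
  have hy0 : y ≠ 0 := by
    intro h; rw [h, mul_zero] at hxy; exact one_ne_zero hxy.symm
  have hA : x.coeff.support.Nonempty := Finsupp.support_nonempty_iff.mpr (mt MonoidAlgebra.coeff_eq_zero.mp hx0)
  have hB : y.coeff.support.Nonempty := Finsupp.support_nonempty_iff.mpr (mt MonoidAlgebra.coeff_eq_zero.mp hy0)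
  -- The supports are singletons
  have hcard : ¬ 1 < x.coeff.support.card * y.coeff.support.card := by
    intro hlt
    obtain ⟨p1, hp1, p2, hp2, hne, hu1, hu2⟩ :=
      TwoUniqueProds.uniqueMul_of_one_lt_card hlt
    rw [Finset.mem_product] at hp1 hp2
    have h1 : (x * y).coeff (p1.1 * p1.2) = x.coeff p1.1 * y.coeff p1.2 :=
      MonoidAlgebra.mul_apply_mul_eq_mul_of_uniqueMul hu1
    have h2 : (x * y).coeff (p2.1 * p2.2) = x.coeff p2.1 * y.coeff p2.2 :=
      MonoidAlgebra.mul_apply_mul_eq_mul_of_uniqueMul hu2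
    have hne1 : x.coeff p1.1 * y.coeff p1.2 ≠ 0 :=
      mul_ne_zero (Finsupp.mem_support_iff.mp hp1.1) (Finsupp.mem_support_iff.mp hp1.2)
    have hne2 : x.coeff p2.1 * y.coeff p2.2 ≠ 0 :=
      mul_ne_zero (Finsupp.mem_support_iff.mp hp2.1) (Finsupp.mem_support_iff.mp hp2.2)
    have e1 : p1.1 * p1.2 = 1 := by
      by_contra h
      apply hne1
      rw [← h1, hxy, MonoidAlgebra.one_def, MonoidAlgebra.coeff_single, Finsupp.single_apply, if_neg (fun hh => h hh.symm)]
    have e2 : p2.1 * p2.2 = 1 := by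
      by_contra h
      apply hne2
      rw [← h2, hxy, MonoidAlgebra.one_def, MonoidAlgebra.coeff_single, Finsupp.single_apply, if_neg (fun hh => h hh.symm)]
    have := hu1 hp2.1 hp2.2 (e2.trans e1.symm)
    exact hne (Prod.ext this.1.symm this.2.symm)
  push_neg at hcard
  have hA1 : x.coeff.support.card = 1 :=
    le_antisymm (by
      by_contra h
      push_neg at h
      have := Nat.mul_le_mul h (Nat.one_le_iff_ne_zero.mpr (Finset.card_ne_zero_of_mem hB.choose_spec))
      omega) (Nat.one_le_iff_ne_zero.mpr (Finset.card_ne_zero_of_mem hA.choose_spec))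
  have hB1 : y.coeff.support.card = 1 :=
    le_antisymm (by
      by_contra h
      push_neg at h
      have := Nat.mul_le_mul (Nat.one_le_iff_ne_zero.mpr (Finset.card_ne_zero_of_mem hA.choose_spec)) h
      omega) (Nat.one_le_iff_ne_zero.mpr (Finset.card_ne_zero_of_mem hB.choose_spec))
  obtain ⟨g, hg⟩ := Finset.card_eq_one.mp hA1
  obtain ⟨h, hh⟩ := Finset.card_eq_one.mp hB1
  obtain ⟨hgx, hxs⟩ := Finsupp.support_eq_singleton.mp hg
  obtain ⟨hhy, hys⟩ := Finsupp.support_eq_singleton.mp hh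
  have hxs' : x = MonoidAlgebra.single g (x.coeff g) := MonoidAlgebra.coeff_injective hxs
  have hys' : y = MonoidAlgebra.single h (y.coeff h) := MonoidAlgebra.coeff_injective hys
  have hprod : MonoidAlgebra.single (g * h) (x.coeff g * y.coeff h) = (1 : MonoidAlgebra D G) := by
    rw [← MonoidAlgebra.single_mul_single]
    exact (congrArg₂ (· * · : MonoidAlgebra D G → _ → _) hxs'.symm hys'.symm).trans hxy
  have hone : (1 : MonoidAlgebra D G) = MonoidAlgebra.single 1 1 := MonoidAlgebra.one_def
  have hgh : g * h = 1 := by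
    have := congrArg (fun z : MonoidAlgebra D G => z.coeff.support) (hprod.trans hone)
    simp only [MonoidAlgebra.coeff_single] at this
    rw [Finsupp.support_single_ne_zero _ (mul_ne_zero hgx hhy),
      Finsupp.support_single_ne_zero _ (one_ne_zero)] at this
    exact Finset.singleton_injective this
  have hcd : x.coeff g * y.coeff h = 1 := by
    have := Finsupp.ext_iff.mp (congrArg MonoidAlgebra.coeff (hprod.trans hone)) (1 : G)
    rwa [hgh, MonoidAlgebra.coeff_single, Finsupp.single_apply, if_pos rfl, MonoidAlgebra.coeff_single, Finsupp.single_apply, if_pos rfl] at this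
  exact ⟨Units.mkOfMulEqOne (x.coeff g) (y.coeff h) hcd, g, hxs'⟩
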